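/- arXiv:2111.04488 — 7 statements merged into one kernel-verified Lean document; each statement's English description precedes it below -/
import Mathlib

section
/- Let r, r̄ and r', r̄' be two solutions of the conjugate equations for a pair of 1-morphisms ι : X → Y, ῑ : Y → X in a 2-C*-category. If r* r = r'* r' (equality of the positive 2-morphisms id_X ⇒ id_X) and both pairs induce the same 'left inverse' in the sense that ι(r)* (ι ∘ ῑ)(·) ι(r) = ι(r')* (ι ∘ ῑ)(·) ι(r'), then there exists a unitary 2-morphism u : ῑ ⇒ ῑ such that r' = (u ⊗ 1_ι) r and r̄' = (1_ι ⊗ u) r̄. -/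
/-- Uniqueness up to a unitary of solutions of the conjugate equations for `ι : N → M`,
`ι' : M → N` inducing the same left inverse and with the same `r* r`. -/
theorem stmt_4 {N M : Type*}
    [Ring N] [StarRing N] [Algebra ℂ N] [StarModule ℂ N]
    [Ring M] [StarRing M] [Algebra ℂ M] [StarModule ℂ M]
    (ι : N →⋆ₐ[ℂ] M) (ι' : M →⋆ₐ[ℂ] N)
    (hι : Function.Injective ι) (hι' : Function.Injective ι')
    (r r₁ : N) (rb rb₁ : M)
    -- intertwining properties: r, r₁ : id_N ⇒ ι'∘ι and rb, rb₁ : id_M ⇒ ι∘ι'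
    (hr : ∀ n : N, r * n = ι' (ι n) * r)
    (hrb : ∀ m : M, rb * m = ι (ι' m) * rb)
    (hr₁ : ∀ n : N, r₁ * n = ι' (ι n) * r₁)
    (hrb₁ : ∀ m : M, rb₁ * m = ι (ι' m) * rb₁)
    -- both pairs solve the conjugate equations
    (hconj1 : star rb * ι r = 1) (hconj2 : star r * ι' rb = 1)
    (hconj1' : star rb₁ * ι r₁ = 1) (hconj2' : star r₁ * ι' rb₁ = 1)
    -- equal positive 2-morphisms r* r = r₁* r₁
    (hnorm : star r * r = star r₁ * r₁)
    -- both pairs induce the same left inverse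
    (hsameE : ∀ m : M, star (ι r) * ι (ι' m) * ι r = star (ι r₁) * ι (ι' m) * ι r₁) :
    ∃ u : N, (∀ m : M, u * ι' m = ι' m * u) ∧
      star u * u = 1 ∧ u * star u = 1 ∧
      r₁ = u * r ∧ rb₁ = ι u * rb := by
  -- key: equal left inverses downstairs
  have key : ∀ m : M, star r * ι' m * r = star r₁ * ι' m * r₁ := by
    intro m
    apply hι
    have h := hsameE m
    simpa [map_mul, map_star] using h
  -- commutation lemmas
  have comm : ∀ m : M, star rb * ι (ι' m) = m * star rb := by
    intro m
    have h := congrArg star (hrb (star m))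
    simpa [star_mul, map_star] using h.symm
  have comm₁ : ∀ m : M, star rb₁ * ι (ι' m) = m * star rb₁ := by
    intro m
    have h := congrArg star (hrb₁ (star m))
    simpa [star_mul, map_star] using h.symm
  -- starred zig-zag equations
  have zig1s : star (ι r) * rb = 1 := by
    have h := congrArg star hconj1
    simpa [star_mul] using h
  have zig2s : ι' (star rb) * r = 1 := by
    have h := congrArg star hconj2
    simpa [star_mul, map_star] using h
  have zig2s' : ι' (star rb₁) * r₁ = 1 := by
    have h := congrArg star hconj2'
    simpa [star_mul, map_star] using h
  set u : N := ι' (star rb) * r₁ with hu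
  set v : N := ι' (star rb₁) * r with hv
  -- u * r = r₁
  have hur : u * r = r₁ := by
    calc u * r = ι' (star rb) * (r₁ * r) := by rw [hu, mul_assoc]
    _ = ι' (star rb) * (ι' (ι r) * r₁) := by rw [hr₁ r]
    _ = (ι' (star rb) * ι' (ι r)) * r₁ := by rw [mul_assoc]
    _ = ι' (star rb * ι r) * r₁ := by rw [map_mul]
    _ = r₁ := by rw [hconj1, map_one, one_mul]
  -- v * u = 1
  have hvu : v * u = 1 := by
    calc v * u = ι' (star rb₁) * (r * ι' (star rb)) * r₁ := by
          rw [hv, hu]; noncomm_ring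
    _ = ι' (star rb₁) * (ι' (ι (ι' (star rb))) * r) * r₁ := by rw [hr (ι' (star rb))]
    _ = (ι' (star rb₁) * ι' (ι (ι' (star rb)))) * (r * r₁) := by noncomm_ring
    _ = ι' (star rb₁ * ι (ι' (star rb))) * (r * r₁) := by rw [map_mul]
    _ = ι' (star rb * star rb₁) * (r * r₁) := by rw [comm₁ (star rb)]
    _ = ι' (star rb * star rb₁) * (ι' (ι r₁) * r) := by rw [hr r₁]
    _ = ι' (star rb * star rb₁ * ι r₁) * r := by simp [map_mul, mul_assoc]
    _ = ι' (star rb * (star rb₁ * ι r₁)) * r := by rw [mul_assoc]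
    _ = ι' (star rb) * r := by rw [hconj1', mul_one]
    _ = 1 := zig2s
  -- u * v = 1
  have huv : u * v = 1 := by
    calc u * v = ι' (star rb) * (r₁ * ι' (star rb₁)) * r := by
          rw [hv, hu]; noncomm_ring
    _ = ι' (star rb) * (ι' (ι (ι' (star rb₁))) * r₁) * r := by rw [hr₁ (ι' (star rb₁))]
    _ = (ι' (star rb) * ι' (ι (ι' (star rb₁)))) * (r₁ * r) := by noncomm_ring
    _ = ι' (star rb * ι (ι' (star rb₁))) * (r₁ * r) := by rw [map_mul]
    _ = ι' (star rb₁ * star rb) * (r₁ * r) := by rw [comm (star rb₁)]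
    _ = ι' (star rb₁ * star rb) * (ι' (ι r) * r₁) := by rw [hr₁ r]
    _ = ι' (star rb₁ * star rb * ι r) * r₁ := by simp [map_mul, mul_assoc]
    _ = ι' (star rb₁ * (star rb * ι r)) * r₁ := by rw [mul_assoc]
    _ = ι' (star rb₁) * r₁ := by rw [hconj1, mul_one]
    _ = 1 := zig2s'
  -- star u * u = 1, using the equal left inverses
  have hsuu : star u * u = 1 := by
    have : star u * u = star r₁ * ι' (rb * star rb) * r₁ := by
      rw [hu, star_mul, map_star, star_star, map_mul]; simp [map_star, mul_assoc]
    rw [this, ← key (rb * star rb), map_mul]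
    calc star r * (ι' rb * ι' (star rb)) * r
        = (star r * ι' rb) * (ι' (star rb) * r) := by noncomm_ring
    _ = 1 := by rw [hconj2, zig2s, one_mul]
  -- star u = v
  have hsu : star u = v := by
    calc star u = star u * (u * v) := by rw [huv, mul_one]
    _ = (star u * u) * v := (mul_assoc (star u) u v).symm
    _ = v := by rw [hsuu, one_mul]
  refine ⟨u, ?_, hsuu, ?_, hur.symm, ?_⟩
  · intro m
    calc u * ι' m = ι' (star rb) * (r₁ * ι' m) := by rw [hu, mul_assoc]
    _ = ι' (star rb) * (ι' (ι (ι' m)) * r₁) := by rw [hr₁ (ι' m)]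
    _ = ι' (star rb * ι (ι' m)) * r₁ := by rw [map_mul]; noncomm_ring
    _ = ι' (m * star rb) * r₁ := by rw [comm m]
    _ = ι' m * u := by rw [map_mul, hu, mul_assoc]
  · rw [hsu]; exact huv
  · -- rb₁ = ι u * rb
    have hiu : ι u = star (ι v) := by rw [← hsu, map_star, star_star]
    calc rb₁ = 1 * rb₁ := (one_mul rb₁).symm
    _ = (star (ι r) * rb) * rb₁ := by rw [zig1s]
    _ = star (ι r) * (rb * rb₁) := by rw [mul_assoc]
    _ = star (ι r) * (ι (ι' rb₁) * rb) := by rw [hrb rb₁]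
    _ = (star (ι r) * ι (ι' rb₁)) * rb := by rw [mul_assoc]
    _ = star (ι v) * rb := by
          rw [hv, map_mul, star_mul, map_star, map_star, star_star]
    _ = ι u * rb := by rw [hiu]
end

section
/- Let N ⊆ M be a unital inclusion of von Neumann algebras and E a normal faithful conditional expectation of M onto N with finite index Ind(E) ∈ Z(M). Then the bidual expectation E'' coincides with E if and only if E(Ind(E)) = Ind(E), equivalently Ind(E) ∈ Z(M) ∩ Z(N). -/
/-- The bidual expectation `E'' = E(Ind E)⁻¹ E(Ind E ·)` coincides with `E` if and only if
`E(Ind E) = Ind E`, equivalently `Ind E ∈ Z(M) ∩ Z(N)` (given that `Ind E` is central in `M`,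
this means `Ind E ∈ N`). -/
theorem stmt_5 {M : Type*} [Ring M] [StarRing M] [Algebra ℂ M] [StarModule ℂ M]
    (N : Subalgebra ℂ M)
    (E : M →ₗ[ℂ] M)
    (hrange : ∀ m : M, E m ∈ N)
    (hfix : ∀ n ∈ N, E n = n)
    (hE1 : E 1 = 1)
    (hbimod : ∀ n₁ ∈ N, ∀ n₂ ∈ N, ∀ m : M, E (n₁ * m * n₂) = n₁ * E m * n₂)
    (hfaithful : ∀ m : M, E (star m * m) = 0 → m = 0)
    -- the finite index Ind(E): a positive invertible element of Z(M) with Ind(E) ≥ 1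
    (Ind : M) (hsa : star Ind = Ind)
    (hcentral : ∀ m : M, Ind * m = m * Ind)
    (IndInv : M) (hIndInv : Ind * IndInv = 1) (hIndInv' : IndInv * Ind = 1)
    (cInv : M) (hcInv : E Ind * cInv = 1) (hcInv' : cInv * E Ind = 1)
    -- the bidual expectation
    (E'' : M → M) (hE'' : ∀ m : M, E'' m = cInv * E (Ind * m)) :
    ((∀ m : M, E'' m = E m) ↔ E Ind = Ind) ∧ (E Ind = Ind ↔ Ind ∈ N) := by
  have key : (∀ m : M, E'' m = E m) → E Ind = Ind := by
    intro h
    -- E (Ind * m) = E Ind * E m for all m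
    have hmul : ∀ m : M, E (Ind * m) = E Ind * E m := by
      intro m
      have h1 : cInv * E (Ind * m) = E m := by rw [← hE'' m, h m]
      calc E (Ind * m) = (E Ind * cInv) * E (Ind * m) := by rw [hcInv, one_mul]
        _ = E Ind * (cInv * E (Ind * m)) := by rw [mul_assoc]
        _ = E Ind * E m := by rw [h1]
    set y := Ind - E Ind with hy
    have hzero : ∀ m : M, E (y * m) = 0 := by
      intro m
      have hb : E (E Ind * m) = E Ind * E m := by
        have := hbimod (E Ind) (hrange Ind) 1 N.one_mem m
        simpa using this
      have : E (y * m) = E (Ind * m) - E (E Ind * m) := by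
        rw [hy, sub_mul, map_sub]
      rw [this, hmul, hb, sub_self]
    have hsy : star (star y) * star y = y * star y := by rw [star_star]
    have : star y = 0 := by
      apply hfaithful
      rw [hsy, hzero]
    have : y = 0 := by
      have := congrArg star this
      simpa using this
    exact (sub_eq_zero.mp this).symm
  constructor
  · constructor
    · exact key
    · intro hInd m
      have hN : Ind ∈ N := hInd ▸ hrange Ind
      have : E (Ind * m) = Ind * E m := by
        have := hbimod Ind hN 1 N.one_mem m
        simpa using this
      rw [hE'', this, ← mul_assoc, ← hInd, hcInv', one_mul]
  · constructor
    · intro hInd; exact hInd ▸ hrange Ind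
    · intro hN; exact hfix Ind hN
end

section
/- Let ι : N → M, ῑ : M → N be unital normal *-homomorphisms of von Neumann algebras, and let r ∈ N with r : id_N ⇒ ῑ∘ι (i.e. r n = ῑ(ι(n)) r for all n ∈ N) and r̄ ∈ M with r̄ : id_M ⇒ ι∘ῑ, solving the conjugate equations r̄* ι(r) = 1 and r* ῑ(r̄) = 1. If r* r is positive invertible in N, then E := ι(r* r)⁻¹ ι(r)* ι(ῑ(·)) ι(r) defines a normal unital completely positive ι(N)-bimodular map from M onto ι(N) which is idempotent, i.e. a conditional expectation of M onto ι(N). -/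
private lemma starAlgHom_map_nonneg {A B : Type*}
    [Ring A] [StarRing A] [Algebra ℂ A] [PartialOrder A] [StarOrderedRing A]
    [Ring B] [StarRing B] [Algebra ℂ B] [PartialOrder B] [StarOrderedRing B]
    (f : A →⋆ₐ[ℂ] B) {a : A} (ha : 0 ≤ a) : 0 ≤ f a := by
  rw [StarOrderedRing.nonneg_iff] at ha ⊢
  induction ha using AddSubmonoid.closure_induction with
  | mem x hx =>
    obtain ⟨y, rfl⟩ := hx
    rw [map_mul, map_star]
    exact AddSubmonoid.subset_closure ⟨f y, rfl⟩
  | zero => simpa using AddSubmonoid.zero_mem _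
  | add x y _ _ hx hy => rw [map_add]; exact AddSubmonoid.add_mem _ hx hy

/-- A solution `r, r̄` of the conjugate equations for `ι : N → M`, `ι' : M → N`, with `r* r`
invertible in `Z(N)`, defines the conditional expectation
`E = ι(r* r)⁻¹ ι(r)* ι(ι'(·)) ι(r)` of `M` onto `ι(N)`: it is unital, takes values in
`ι(N)`, fixes `ι(N)`, is `ι(N)`-bimodular, idempotent and completely positive. -/
theorem stmt_9 {N M : Type*}
    [Ring N] [StarRing N] [Algebra ℂ N] [StarModule ℂ N]
    [PartialOrder N] [StarOrderedRing N]
    [Ring M] [StarRing M] [Algebra ℂ M] [StarModule ℂ M]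
    [PartialOrder M] [StarOrderedRing M]
    (ι : N →⋆ₐ[ℂ] M) (ι' : M →⋆ₐ[ℂ] N)
    (hι : Function.Injective ι) (hι' : Function.Injective ι')
    (r : N) (rb : M)
    -- intertwining properties
    (hr : ∀ n : N, r * n = ι' (ι n) * r)
    (hrb : ∀ m : M, rb * m = ι (ι' m) * rb)
    -- conjugate equations
    (hconj1 : star rb * ι r = 1) (hconj2 : star r * ι' rb = 1)
    -- r* r is positive invertible in Z(N), with inverse s
    (hrrpos : 0 ≤ star r * r)
    (s : N) (hs_sa : star s = s) (hspos : 0 ≤ s)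
    (hs1 : s * (star r * r) = 1) (hs2 : (star r * r) * s = 1)
    (hscentral : ∀ n : N, s * n = n * s)
    (hrrcentral : ∀ n : N, (star r * r) * n = n * (star r * r))
    (E : M → M) (hE : ∀ m : M, E m = ι s * (star (ι r) * ι (ι' m) * ι r)) :
    E 1 = 1
    ∧ (∀ m : M, E m ∈ Set.range ι)
    ∧ (∀ n : N, E (ι n) = ι n)
    ∧ (∀ n₁ n₂ : N, ∀ m : M, E (ι n₁ * m * ι n₂) = ι n₁ * E m * ι n₂)
    ∧ (∀ m : M, E (E m) = E m)
    ∧ (∀ m : M, 0 ≤ m → 0 ≤ E m)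
    ∧ (∀ (k : ℕ) (a b : Fin k → M),
        0 ≤ ∑ i, ∑ j, star (b i) * E (star (a i) * a j) * b j) := by
  -- `E m = ι (s * (star r * ι' m * r))`
  have hE' : ∀ m : M, E m = ι (s * (star r * ι' m * r)) := by
    intro m
    rw [hE, map_mul, map_mul, map_mul, map_star]
  -- reversed intertwining: `n * star r = star r * ι' (ι n)`
  have hr' : ∀ n : N, n * star r = star r * ι' (ι n) := by
    intro n
    have := congrArg star (hr (star n))
    simpa [star_mul, map_star] using this
  have hsc2 : ∀ x y : N, s * (x * y) = x * (s * y) := fun x y => by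
    rw [← mul_assoc, hscentral x, mul_assoc]
  have hunit : E 1 = 1 := by
    rw [hE', map_one, mul_one, ← mul_assoc, mul_assoc s, hs1, map_one]
  have hrange : ∀ m : M, E m ∈ Set.range ι := fun m => ⟨_, (hE' m).symm⟩
  have hfix : ∀ n : N, E (ι n) = ι n := by
    intro n
    rw [hE']
    congr 1
    rw [mul_assoc (star r), ← hr n, ← mul_assoc (star r) r n, ← mul_assoc, hs1, one_mul]
  have hbimod : ∀ n₁ n₂ : N, ∀ m : M, E (ι n₁ * m * ι n₂) = ι n₁ * E m * ι n₂ := by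
    intro n₁ n₂ m
    rw [hE' m, hE', ← map_mul, ← map_mul]
    congr 1
    rw [map_mul, map_mul]
    calc s * (star r * (ι' (ι n₁) * ι' m * ι' (ι n₂)) * r)
        = s * ((star r * ι' (ι n₁)) * ι' m * (ι' (ι n₂) * r)) := by
          simp only [mul_assoc]
      _ = s * (n₁ * star r * ι' m * (r * n₂)) := by rw [← hr', ← hr]
      _ = (s * n₁) * (star r * ι' m * r) * n₂ := by simp only [mul_assoc]
      _ = n₁ * (s * (star r * ι' m * r)) * n₂ := by rw [hscentral]; simp only [mul_assoc]
  have hidem : ∀ m : M, E (E m) = E m := by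
    intro m
    rw [hE' m, hfix]
  -- key identity: `E (star a * c) = ι (star (ι' a * r) * s * (ι' c * r))`
  have hkey : ∀ a c : M, E (star a * c) = ι (star (ι' a * r) * s * (ι' c * r)) := by
    intro a c
    rw [hE']
    congr 1
    simp only [map_mul, map_star, star_mul, mul_assoc]
    rw [hsc2, hsc2]
  have hEadd : ∀ m₁ m₂ : M, E (m₁ + m₂) = E m₁ + E m₂ := by
    intro m₁ m₂
    simp only [hE', map_add, add_mul, mul_add]
  have hpos : ∀ m : M, 0 ≤ m → 0 ≤ E m := by
    intro m hm
    rw [StarOrderedRing.nonneg_iff] at hm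
    induction hm using AddSubmonoid.closure_induction with
    | mem x hx =>
      obtain ⟨a, rfl⟩ := hx
      rw [hkey]
      exact starAlgHom_map_nonneg ι (star_left_conjugate_nonneg hspos _)
    | zero => simp [hE']
    | add x y _ _ hx hy => rw [hEadd]; exact add_nonneg hx hy
  refine ⟨hunit, hrange, hfix, hbimod, hidem, hpos, ?_⟩
  intro k a b
  set c : Fin k → M := fun i => ι (ι' (a i) * r) * b i with hc
  have hterm : ∀ i j, star (b i) * E (star (a i) * a j) * b j
      = star (c i) * ι s * c j := by
    intro i j
    rw [hkey, hc]
    simp only [map_mul, star_mul, map_star, mul_assoc]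
  have h2 : star (∑ i, c i) * ι s * (∑ j, c j) = ∑ i, ∑ j, star (c i) * ι s * c j := by
    rw [star_sum, Finset.sum_mul, Finset.sum_mul]
    exact Finset.sum_congr rfl fun i _ => Finset.mul_sum _ _ _
  simp only [hterm]
  rw [← h2]
  exact star_left_conjugate_nonneg (starAlgHom_map_nonneg ι hspos) _
end

section
/- In the setting of a solution r, r̄ of the conjugate equations for ι : N → M and ῑ : M → N, the element e := ι(r) ι(r* r)⁻¹ ι(r)* implements the expectation E = ι(r* r)⁻¹ ι(r)* ιῑ(·) ι(r) in the sense that, after applying the isomorphism identifying the relevant algebras, ι(w w*) ιῑ(m) ι(w w*) = ιῑ(E(m)) ι(w w*) for all m ∈ M, where w := r (r* r)^{-1/2}. -/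
/-- The element `e = ι(r) ι(r* r)⁻¹ ι(r)*` equals `ι(w w*)` for the normalized isometry
`w = r (r* r)^{-1/2}`, and it implements the expectation
`E = ι(r* r)⁻¹ ι(r)* ιι'(·) ι(r)` in the sense that
`ι(w w*) ιι'(m) ι(w w*) = ιι'(E m) ι(w w*)` for all `m ∈ M`. -/
theorem stmt_10 {N M : Type*}
    [Ring N] [StarRing N] [Algebra ℂ N] [StarModule ℂ N]
    [Ring M] [StarRing M] [Algebra ℂ M] [StarModule ℂ M]
    (ι : N →⋆ₐ[ℂ] M) (ι' : M →⋆ₐ[ℂ] N)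
    (hι : Function.Injective ι) (hι' : Function.Injective ι')
    (r : N) (rb : M)
    (hr : ∀ n : N, r * n = ι' (ι n) * r)
    (hrb : ∀ m : M, rb * m = ι (ι' m) * rb)
    (hconj1 : star rb * ι r = 1) (hconj2 : star r * ι' rb = 1)
    -- s = (r* r)⁻¹, central in N
    (s : N) (hs_sa : star s = s)
    (hs1 : s * (star r * r) = 1) (hs2 : (star r * r) * s = 1)
    (hscentral : ∀ n : N, s * n = n * s)
    -- t = (r* r)^{-1/2} : central self-adjoint square root of s
    (t : N) (ht_sa : star t = t) (htcentral : ∀ n : N, t * n = n * t)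
    (hts : t * t = s) (ht : t * (star r * r) * t = 1)
    (w : N) (hw : w = r * t)
    (E : M → M) (hE : ∀ m : M, E m = ι s * (star (ι r) * ι (ι' m) * ι r)) :
    star w * w = 1
    ∧ (∀ n : N, w * n = ι' (ι n) * w)
    ∧ ι r * ι s * star (ι r) = ι (w * star w)
    ∧ (∀ m : M,
        ι (w * star w) * ι (ι' m) * ι (w * star w) = ι (ι' (E m)) * ι (w * star w)) := by
  have hww : w * star w = r * s * star r := by
    rw [hw, star_mul, ht_sa]
    calc r * t * (t * star r) = r * (t * t) * star r := by noncomm_ring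
    _ = r * s * star r := by rw [hts]
  refine ⟨?_, ?_, ?_, ?_⟩
  · rw [hw, star_mul, ht_sa]
    calc t * star r * (r * t) = t * (star r * r) * t := by noncomm_ring
    _ = 1 := ht
  · intro n
    rw [hw, mul_assoc, htcentral n, ← mul_assoc, hr n, mul_assoc]
  · rw [hww, map_mul, map_mul, map_star]
  · intro m
    rw [← map_mul, ← map_mul, ← map_mul]
    congr 1
    rw [hww, hE, ← map_star, ← map_mul, ← map_mul, ← map_mul]
    calc r * s * star r * ι' m * (r * s * star r)
        = r * (s * (star r * ι' m * r)) * (s * star r) := by noncomm_ring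
      _ = ι' (ι (s * (star r * ι' m * r))) * r * (s * star r) := by
            rw [← hr (s * (star r * ι' m * r))]
      _ = _ := by noncomm_ring
end

section
/- If r, r̄ solve the conjugate equations for ι, ῑ and determine the minimal expectation E⁰ (which has scalar index Ind(E⁰) = [M:N]₀ · 1), and if r* r = √([M:N]₀) · 1, then ‖r* r‖ · ‖r̄* r̄‖ = [M:N]₀, i.e. the solution attains the minimal value of the product of the norms of the loop parameters. -/
/-- If `r, r̄` solve the conjugate equations for `ι, ι'` and determine the minimal
expectation (scalar index `Ind(E⁰) = r̄* ι(r* r) r̄ = [M:N]₀ • 1`), and if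
`r* r = √[M:N]₀ • 1`, then `‖r* r‖ ⬝ ‖r̄* r̄‖ = [M:N]₀`, i.e. the solution attains the
minimal value of the product of the norms of the loop parameters. -/
theorem stmt_12 {N M : Type*}
    [NormedRing N] [StarRing N] [CStarRing N] [NormedAlgebra ℂ N] [StarModule ℂ N]
    [NormOneClass N] [CompleteSpace N]
    [NormedRing M] [StarRing M] [CStarRing M] [NormedAlgebra ℂ M] [StarModule ℂ M]
    [NormOneClass M] [CompleteSpace M]
    (ι : N →⋆ₐ[ℂ] M) (ι' : M →⋆ₐ[ℂ] N)
    (hι : Function.Injective ι) (hι' : Function.Injective ι')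
    (r : N) (rb : M)
    (hr : ∀ n : N, r * n = ι' (ι n) * r)
    (hrb : ∀ m : M, rb * m = ι (ι' m) * rb)
    (hconj1 : star rb * ι r = 1) (hconj2 : star r * ι' rb = 1)
    -- [M:N]₀ = d, the (scalar) minimal index, attained: Ind(E⁰) = d • 1
    (d : ℝ) (hd : 1 ≤ d)
    (hind : star rb * ι (star r * r) * rb = (d : ℂ) • (1 : M))
    (hrr : star r * r = ((Real.sqrt d : ℂ)) • (1 : N)) :
    ‖star r * r‖ * ‖star rb * rb‖ = d := by
  have hd0 : (0:ℝ) < d := lt_of_lt_of_le one_pos hd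
  have hs0 : (0:ℝ) < Real.sqrt d := Real.sqrt_pos.mpr hd0
  have hsne : ((Real.sqrt d : ℂ)) ≠ 0 := by
    exact_mod_cast ne_of_gt hs0
  -- ι (star r * r) = √d • 1
  have h1 : ι (star r * r) = ((Real.sqrt d : ℂ)) • (1 : M) := by
    rw [hrr, map_smul, map_one]
  have h2 : ((Real.sqrt d : ℂ)) • (star rb * rb) = (d : ℂ) • (1 : M) := by
    have := hind
    rw [h1] at this
    calc ((Real.sqrt d : ℂ)) • (star rb * rb)
        = star rb * (((Real.sqrt d : ℂ)) • (1:M)) * rb := by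
          rw [mul_smul_comm, mul_one, smul_mul_assoc]
      _ = (d : ℂ) • (1 : M) := this
  have hds : (d:ℂ) = ((Real.sqrt d:ℂ)) * ((Real.sqrt d:ℂ)) := by
    norm_cast
    exact (Real.mul_self_sqrt hd0.le).symm
  have h3 : star rb * rb = ((Real.sqrt d : ℂ)) • (1 : M) := by
    have := congrArg (fun x => ((Real.sqrt d : ℂ))⁻¹ • x) h2
    simp only [smul_smul, inv_mul_cancel₀ hsne, one_smul] at this
    rw [this, hds, ← mul_assoc, inv_mul_cancel₀ hsne, one_mul]
  have ha : ‖star r * r‖ = Real.sqrt d := by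
    rw [hrr, norm_smul, norm_one, mul_one, Complex.norm_real, Real.norm_eq_abs,
      abs_of_pos hs0]
  have hb : ‖star rb * rb‖ = Real.sqrt d := by
    rw [h3, norm_smul, norm_one, mul_one, Complex.norm_real, Real.norm_eq_abs,
      abs_of_pos hs0]
  rw [ha, hb, Real.mul_self_sqrt hd0.le]
end

section
/- Let (θ, x, w) be a Q-system in End(N): x² = x θ(x), x w = 1 = x θ(w), x θ(x)* = x* x = θ(x) x*, with x θ²(n) = θ(n) x and w n = θ(n) w for all n ∈ N, and w* w positive invertible in Z(N). Then x* = x θ(x* w), and consequently the algebra generated by θ(N) and x equals x θ(N) = θ(N) x*. -/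
/-- For a Q-system `(θ, x, w)` in `End(N)` one has `x* = x θ(x* w)`, and consequently the
algebra generated by `θ(N)` and `x` equals `x θ(N) = θ(N) x*`. -/
theorem stmt_13 {N : Type*} [Ring N] [StarRing N] [Algebra ℂ N] [StarModule ℂ N]
    (θ : N →⋆ₐ[ℂ] N) (x w : N)
    -- Frobenius algebra relations
    (hmul : x * x = x * θ x)
    (hunit1 : x * w = 1) (hunit2 : x * θ w = 1)
    (hfrob1 : x * star (θ x) = star x * x) (hfrob2 : star x * x = θ x * star x)
    -- intertwining relations
    (hint_x : ∀ n : N, x * θ (θ n) = θ n * x)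
    (hint_w : ∀ n : N, w * n = θ n * w)
    -- w* w positive invertible in Z(N)
    (u : N) (hu1 : u * (star w * w) = 1) (hu2 : (star w * w) * u = 1)
    (hww_central : ∀ n : N, (star w * w) * n = n * (star w * w)) :
    star x = x * θ (star x * w)
    ∧ ((Algebra.adjoin ℂ (Set.range (θ : N → N) ∪ {x}) : Subalgebra ℂ N) : Set N)
        = {z : N | ∃ n : N, z = x * θ n}
    ∧ {z : N | ∃ n : N, z = x * θ n} = {z : N | ∃ n : N, z = θ n * star x} := by
  -- main identity : star x = x * θ (star x * w)
  have hkey : star x = x * θ (star x * w) := by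
    calc star x = star x * (x * θ w) := by rw [hunit2, mul_one]
    _ = (star x * x) * θ w := by rw [mul_assoc]
    _ = (x * star (θ x)) * θ w := by rw [hfrob1]
    _ = x * (θ (star x) * θ w) := by rw [map_star, mul_assoc]
    _ = x * θ (star x * w) := by rw [map_mul]
  -- starred version of hint_x : star x * θ n = θ (θ n) * star x
  have hstar : ∀ n : N, star x * θ n = θ (θ n) * star x := by
    intro n
    have h := congrArg star (hint_x (star n))
    simpa [star_mul, map_star] using h.symm
  -- x = θ (star w * x) * star x
  have hx : x = θ (star w * x) * star x := by
    have h := congrArg star hkey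
    simpa [star_mul, map_star, star_star] using h
  -- the candidate subalgebra
  refine ⟨hkey, ?_, ?_⟩
  · -- adjoin = { x * θ n }
    let S : Subalgebra ℂ N :=
      { carrier := {z : N | ∃ n : N, z = x * θ n}
        mul_mem' := by
          rintro a b ⟨p, rfl⟩ ⟨q, rfl⟩
          refine ⟨x * θ p * q, ?_⟩
          calc (x * θ p) * (x * θ q) = x * (θ p * x) * θ q := by noncomm_ring
          _ = x * (x * θ (θ p)) * θ q := by rw [hint_x]
          _ = (x * x) * θ (θ p) * θ q := by noncomm_ring
          _ = (x * θ x) * θ (θ p) * θ q := by rw [hmul]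
          _ = x * θ (x * θ p * q) := by simp [map_mul, mul_assoc]
        one_mem' := ⟨w, hunit2.symm⟩
        add_mem' := by
          rintro a b ⟨p, rfl⟩ ⟨q, rfl⟩
          exact ⟨p + q, by rw [map_add, mul_add]⟩
        zero_mem' := ⟨0, by simp⟩
        algebraMap_mem' := by
          intro c
          refine ⟨c • w, ?_⟩
          rw [map_smul, mul_smul_comm, hunit2, Algebra.algebraMap_eq_smul_one]
      }
    have hSle : Algebra.adjoin ℂ (Set.range (θ : N → N) ∪ {x}) ≤ S := by
      apply Algebra.adjoin_le
      rintro z (⟨n, rfl⟩ | rfl)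
      · exact ⟨w * n, by rw [map_mul, ← mul_assoc, hunit2, one_mul]⟩
      · exact ⟨1, by simp⟩
    have hleS : (S : Set N) ⊆
        (Algebra.adjoin ℂ (Set.range (θ : N → N) ∪ {x}) : Subalgebra ℂ N) := by
      rintro z ⟨n, rfl⟩
      exact mul_mem (Algebra.subset_adjoin (Or.inr rfl))
        (Algebra.subset_adjoin (Or.inl ⟨n, rfl⟩))
    exact Set.Subset.antisymm hSle hleS
  · -- { x * θ n } = { θ n * star x }
    ext z
    constructor
    · rintro ⟨n, rfl⟩
      refine ⟨star w * x * θ n, ?_⟩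
      calc x * θ n = (θ (star w * x) * star x) * θ n := by rw [← hx]
      _ = θ (star w * x) * (star x * θ n) := by rw [mul_assoc]
      _ = θ (star w * x) * (θ (θ n) * star x) := by rw [hstar]
      _ = θ (star w * x * θ n) * star x := by simp [map_mul, mul_assoc]
    · rintro ⟨n, rfl⟩
      refine ⟨θ n * (star x * w), ?_⟩
      calc θ n * star x = θ n * (x * θ (star x * w)) := by rw [← hkey]
      _ = (θ n * x) * θ (star x * w) := by rw [mul_assoc]
      _ = (x * θ (θ n)) * θ (star x * w) := by rw [hint_x]
      _ = x * θ (θ n * (star x * w)) := by simp [map_mul, mul_assoc]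
end

section
/- Let ι : N → M be an inclusion of properly infinite von Neumann algebras with conjugate morphism ῑ := ι⁻¹ ∘ γ, where γ is a canonical endomorphism, and let r, r̄ solve the conjugate equations for ι, ῑ corresponding to a finite index expectation E. Then the triple (θ, x, w) with θ := ῑ ∘ ι, x := ῑ(r̄)*, w := r is a Q-system in End(N): it satisfies the unitary Frobenius algebra relations x² = x θ(x), x w = 1 = x θ(w), x θ(x)* = x* x = θ(x) x*, and w* w = r* r is positive invertible in Z(N). -/
/-- From a solution `r, r̄` of the conjugate equations for `ι : N → M` and its conjugate
`ι' : M → N` (corresponding to a finite index expectation `E`), the triple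
`(θ, x, w) = (ι'∘ι, ι'(r̄)*, r)` is a Q-system in `End(N)`: it satisfies the unitary
Frobenius algebra relations and the intertwining relations, and `w* w = r* r` is positive
invertible in `Z(N)`. -/
theorem stmt_16 {N M : Type*}
    [NormedRing N] [StarRing N] [CStarRing N] [NormedAlgebra ℂ N] [StarModule ℂ N]
    [CompleteSpace N] [PartialOrder N] [StarOrderedRing N]
    [NormedRing M] [StarRing M] [CStarRing M] [NormedAlgebra ℂ M] [StarModule ℂ M]
    [CompleteSpace M]
    (ι : N →⋆ₐ[ℂ] M) (ι' : M →⋆ₐ[ℂ] N)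
    (hι : Function.Injective ι) (hι' : Function.Injective ι')
    (r : N) (rb : M)
    (hr : ∀ n : N, r * n = ι' (ι n) * r)
    (hrb : ∀ m : M, rb * m = ι (ι' m) * rb)
    (hconj1 : star rb * ι r = 1) (hconj2 : star r * ι' rb = 1)
    (θ : N →⋆ₐ[ℂ] N) (hθ : ∀ n : N, θ n = ι' (ι n))
    (x w : N) (hx : x = ι' (star rb)) (hw : w = r) :
    -- unitary Frobenius algebra relations
    x * x = x * θ x
    ∧ x * w = 1 ∧ x * θ w = 1
    ∧ x * star (θ x) = star x * x ∧ star x * x = θ x * star x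
    -- intertwining relations
    ∧ (∀ n : N, x * θ (θ n) = θ n * x)
    ∧ (∀ n : N, w * n = θ n * w)
    -- w* w = r* r is positive invertible in Z(N)
    ∧ star w * w = star r * r
    ∧ 0 ≤ star r * r
    ∧ IsUnit (star r * r)
    ∧ (∀ n : N, (star r * r) * n = n * (star r * r)) := by
  letI : CStarAlgebra N :=
    { ‹NormedRing N›, ‹StarRing N›, ‹CStarRing N›, ‹NormedAlgebra ℂ N›,
      ‹StarModule ℂ N›, ‹CompleteSpace N› with }
  -- key consequence of `hrb`: `star rb` intertwines the other way
  have key1 : ∀ m : M, star rb * ι (ι' m) = m * star rb := by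
    intro m
    have h := congrArg star (hrb (star m))
    simpa [star_mul, map_star] using h.symm
  -- key consequence of `hr`
  have key2 : ∀ n : N, star r * ι' (ι n) = n * star r := by
    intro n
    have h := congrArg star (hr (star n))
    simpa [star_mul, map_star] using h.symm
  -- x is a left inverse of r
  have xr : ι' (star rb) * r = 1 := by
    have h := congrArg star hconj2
    simpa [star_mul, map_star] using h
  subst hx hw
  refine ⟨?_, ?_, ?_, ?_, ?_, ?_, ?_, rfl, star_mul_self_nonneg w, ?_, ?_⟩
  · rw [hθ, ← map_mul, ← map_mul, key1]
  · exact xr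
  · rw [hθ, ← map_mul, hconj1, map_one]
  · rw [hθ]
    simp only [← map_star, star_star, ← map_mul]
    rw [key1]
  · rw [hθ]
    simp only [← map_star, star_star, ← map_mul]
    rw [← hrb]
  · intro n
    rw [hθ, hθ, ← map_mul, ← map_mul, key1]
  · intro n
    rw [hθ, hr]
  · -- invertibility of `star w * w`
    rcases subsingleton_or_nontrivial N with hN | hN
    · exact isUnit_of_subsingleton _
    have hone : (1 : N) ≠ 0 := one_ne_zero
    set y : N := ι' (star rb) with hy
    have hle : star y * y ≤ algebraMap ℝ N ‖star y * y‖ :=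
      (IsSelfAdjoint.star_mul_self y).le_algebraMap_norm_self
    have h1 : (1 : N) ≤ star w * algebraMap ℝ N ‖star y * y‖ * w := by
      have hc := star_left_conjugate_le_conjugate hle w
      calc (1 : N) = star w * (star y * y) * w := by
            rw [show star w * (star y * y) * w = star (y * w) * (y * w) by
              simp [star_mul]; noncomm_ring, xr]; simp
        _ ≤ star w * algebraMap ℝ N ‖star y * y‖ * w := hc
    set t : ℝ := ‖star y * y‖ with ht
    have ht0 : 0 < t := by
      by_contra h
      push_neg at h
      have hteq : t = 0 := le_antisymm h (norm_nonneg _)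
      rw [hteq] at h1
      simp only [map_zero, mul_zero, zero_mul] at h1
      exact hone (le_antisymm h1 zero_le_one)
    have h2 : algebraMap ℝ N t⁻¹ ≤ star w * w := by
      have hc := star_left_conjugate_le_conjugate h1 (algebraMap ℝ N (Real.sqrt t⁻¹))
      have hst : star (algebraMap ℝ N (Real.sqrt t⁻¹)) = algebraMap ℝ N (Real.sqrt t⁻¹) := by
        rw [← algebraMap_star_comm, star_trivial]
      rw [hst] at hc
      have hsq : Real.sqrt t⁻¹ * Real.sqrt t⁻¹ = t⁻¹ :=
        Real.mul_self_sqrt (by positivity)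
      calc algebraMap ℝ N t⁻¹
          = algebraMap ℝ N (Real.sqrt t⁻¹) * 1 * algebraMap ℝ N (Real.sqrt t⁻¹) := by
            rw [mul_one, ← map_mul, hsq]
        _ ≤ algebraMap ℝ N (Real.sqrt t⁻¹) * (star w * algebraMap ℝ N t * w)
              * algebraMap ℝ N (Real.sqrt t⁻¹) := hc
        _ = (Real.sqrt t⁻¹ * t * Real.sqrt t⁻¹) • (star w * w) := by
            simp only [Algebra.algebraMap_eq_smul_one, smul_mul_assoc, mul_smul_comm,
              smul_smul, one_mul, mul_one]
            congr 1
            ring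
        _ = star w * w := by
            rw [mul_comm (Real.sqrt t⁻¹) t, mul_assoc, hsq,
              mul_inv_cancel₀ (ne_of_gt ht0), one_smul]
    have hnn : (0 : N) ≤ algebraMap ℝ N t⁻¹ := by
      have : algebraMap ℝ N t⁻¹
          = star (algebraMap ℝ N (Real.sqrt t⁻¹)) * algebraMap ℝ N (Real.sqrt t⁻¹) := by
        rw [← algebraMap_star_comm, star_trivial, ← map_mul,
          Real.mul_self_sqrt (by positivity)]
      exact this ▸ star_mul_self_nonneg _
    exact CStarAlgebra.isUnit_of_le (algebraMap ℝ N t⁻¹) h2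
      (show (0 : N) ≤ algebraMap ℝ N t⁻¹ ∧ IsUnit (algebraMap ℝ N t⁻¹) from ⟨hnn,
      ((isUnit_iff_ne_zero.mpr (by positivity : t⁻¹ ≠ 0)).map (algebraMap ℝ N))⟩)
  · intro n
    rw [mul_assoc, hr, ← mul_assoc, key2, mul_assoc]
end
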